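/- Let g = log p for a Gaussian mixture p on ℝᵐ with common covariance Σ, and suppose the correction matrix G(z) = H_g(z) + Σ⁻¹ satisfies 0 ≤ xᵀG(z)x ≤ c‖x‖² for all x, z. Let {z^l, w_s^l} (l = 0,…,2m) be the unscented sigma points of N(μ_j, Σ) with parameter λ > 0. Then the sigma-point approximation Ĥ_j = Σ_l w_s^l g(z^l) satisfies Ĥ_j = g(μ_j) − m/2 + φ with |φ| ≤ c m σ²_max / 2, where σ²_max is the maximal eigenvalue of Σ. -/

import Mathlib

open Matrix MeasureTheory

/-- Density of the multivariate Gaussian `N(μ, S)` on `ℝᵐ`. -/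
noncomputable def gaussPdf {m : ℕ} (μ : Fin m → ℝ) (S : Matrix (Fin m) (Fin m) ℝ)
    (z : Fin m → ℝ) : ℝ :=
  (Real.sqrt ((2 * Real.pi) ^ m * S.det))⁻¹ *
    Real.exp (-(1 / 2) * ((z - μ) ⬝ᵥ (S⁻¹ *ᵥ (z - μ))))

open scoped ComplexOrder in
/-- The positive semidefinite square root of a positive semidefinite matrix
(as defined in Mathlib of December 2024, since removed). -/
noncomputable def Matrix.PosSemidef.sqrt {n 𝕜 : Type*} [Fintype n] [DecidableEq n] [RCLike 𝕜]
    {A : Matrix n n 𝕜} (hA : A.PosSemidef) : Matrix n n 𝕜 :=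
  (hA.1.eigenvectorUnitary : Matrix n n 𝕜) *
    diagonal ((RCLike.ofReal : ℝ → 𝕜) ∘ Real.sqrt ∘ hA.1.eigenvalues) *
    (star hA.1.eigenvectorUnitary : Matrix n n 𝕜)

open scoped ComplexOrder in
lemma Matrix.PosSemidef.sqrt_mul_self {n : Type*} [Fintype n] [DecidableEq n]
    {A : Matrix n n ℝ} (hA : A.PosSemidef) : hA.sqrt * hA.sqrt = A := by
  unfold Matrix.PosSemidef.sqrt
  set U : Matrix n n ℝ := (hA.1.eigenvectorUnitary : Matrix n n ℝ)
  have hU : (star hA.1.eigenvectorUnitary : Matrix n n ℝ) * U = 1 :=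
    Unitary.coe_star_mul_self _
  set D := diagonal ((RCLike.ofReal : ℝ → ℝ) ∘ Real.sqrt ∘ hA.1.eigenvalues)
  have hDD : D * D = diagonal ((RCLike.ofReal : ℝ → ℝ) ∘ hA.1.eigenvalues) := by
    simp only [D, diagonal_mul_diagonal]
    congr 1; funext i
    simp [Real.mul_self_sqrt (hA.eigenvalues_nonneg i)]
  conv_rhs => rw [hA.1.spectral_theorem, Unitary.conjStarAlgAut_apply]
  calc U * D * (star hA.1.eigenvectorUnitary : Matrix n n ℝ) *
        (U * D * (star hA.1.eigenvectorUnitary : Matrix n n ℝ))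
      = U * D * ((star hA.1.eigenvectorUnitary : Matrix n n ℝ) * U) * D *
        (star hA.1.eigenvectorUnitary : Matrix n n ℝ) := by simp only [Matrix.mul_assoc]
    _ = U * (D * D) * (star hA.1.eigenvectorUnitary : Matrix n n ℝ) := by
        rw [hU, Matrix.mul_one]; simp only [Matrix.mul_assoc]
    _ = _ := by rw [hDD]

lemma Matrix.PosSemidef.sqrt_transpose {n : Type*} [Fintype n] [DecidableEq n]
    {A : Matrix n n ℝ} (hA : A.PosSemidef) : hA.sqrtᵀ = hA.sqrt := by
  unfold Matrix.PosSemidef.sqrt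
  rw [transpose_mul, transpose_mul, diagonal_transpose, Matrix.mul_assoc]
  congr 1

lemma midpoint_ineq {m : ℕ} (g : (Fin m → ℝ) → ℝ) (hg : ContDiff ℝ 2 g)
    (μ φ : Fin m → ℝ) (a : ℝ)
    (ha : ∀ z, 0 ≤ iteratedFDeriv ℝ 2 g z ![φ, φ] + a) :
    2 * g μ ≤ g (μ + φ) + g (μ - φ) + a := by
  set L : ℝ → (Fin m → ℝ) := fun t => μ + t • φ with hLdef
  have hL : ∀ t : ℝ, HasDerivAt L φ t := by
    intro t
    have h := ((hasDerivAt_id t).smul_const φ).const_add μ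
    rw [one_smul] at h
    exact h
  have hD : Differentiable ℝ g := hg.differentiable (by norm_num)
  have hD2 : Differentiable ℝ (fderiv ℝ g) :=
    (hg.fderiv_right (m := 1) (by norm_num)).differentiable (by norm_num)
  set f : ℝ → ℝ := fun t => g (L t) + t ^ 2 * (a / 2) with hfdef
  set f' : ℝ → ℝ := fun t => fderiv ℝ g (L t) φ + t * a with hf'def
  set f'' : ℝ → ℝ := fun t => fderiv ℝ (fderiv ℝ g) (L t) φ φ + a with hf''def
  have h1 : ∀ t, HasDerivAt f (f' t) t := by
    intro t
    have hq : HasDerivAt (fun t : ℝ => t ^ 2 * (a / 2)) (t * a) t := by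
      have := (hasDerivAt_pow 2 t).mul_const (a / 2)
      refine this.congr_deriv ?_
      rw [show (2:ℕ) - 1 = 1 from rfl, pow_one]; push_cast; ring
    exact (((hD _).hasFDerivAt.comp_hasDerivAt t (hL t)).add hq)
  have h2 : ∀ t, HasDerivAt f' (f'' t) t := by
    intro t
    have hc : HasDerivAt (fun t => fderiv ℝ g (L t)) (fderiv ℝ (fderiv ℝ g) (L t) φ) t :=
      (hD2 _).hasFDerivAt.comp_hasDerivAt t (hL t)
    have happ := hc.clm_apply (hasDerivAt_const t φ)
    have hlin : HasDerivAt (fun t : ℝ => t * a) a t := by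
      simpa using (hasDerivAt_id t).mul_const a
    have h := happ.add hlin
    simp only [map_zero, add_zero] at h
    exact h
  have hconv : ConvexOn ℝ Set.univ f := by
    apply convexOn_of_hasDerivWithinAt2_nonneg (f' := f') (f'' := f'') convex_univ
    · exact fun x hx => (h1 x).continuousAt.continuousWithinAt
    · exact fun x hx => (h1 x).hasDerivWithinAt
    · exact fun x hx => (h2 x).hasDerivWithinAt
    · intro x hx
      have := ha (L x)
      rwa [iteratedFDeriv_two_apply] at this
  have := hconv.2 (Set.mem_univ (1 : ℝ)) (Set.mem_univ (-1 : ℝ))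
    (by norm_num : (0:ℝ) ≤ 1/2) (by norm_num : (0:ℝ) ≤ 1/2) (by norm_num)
  have h0 : (1/2 : ℝ) • (1:ℝ) + (1/2 : ℝ) • (-1:ℝ) = 0 := by norm_num
  rw [h0] at this
  have e0 : f 0 = g μ := by simp [hfdef, hLdef]
  have e1 : f 1 = g (μ + φ) + a / 2 := by simp [hfdef, hLdef]
  have e2 : f (-1) = g (μ - φ) + a / 2 := by
    simp [hfdef, hLdef, sub_eq_add_neg]
  rw [e0, e1, e2, smul_eq_mul, smul_eq_mul] at this
  linarith

lemma gaussPdf_contDiff {m : ℕ} (μ : Fin m → ℝ) (S : Matrix (Fin m) (Fin m) ℝ) :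
    ContDiff ℝ 2 (gaussPdf μ S) := by
  unfold gaussPdf
  apply ContDiff.mul contDiff_const
  apply ContDiff.exp
  apply ContDiff.mul contDiff_const
  simp only [dotProduct, mulVec]
  apply ContDiff.sum
  intro i _
  apply ContDiff.mul
  · exact ((contDiff_apply ℝ ℝ i).sub contDiff_const)
  · apply ContDiff.sum
    intro j _
    exact contDiff_const.mul ((contDiff_apply ℝ ℝ j).sub contDiff_const)

lemma gaussPdf_pos {m : ℕ} (μ : Fin m → ℝ) {S : Matrix (Fin m) (Fin m) ℝ}
    (hS : S.PosDef) (z : Fin m → ℝ) : 0 < gaussPdf μ S z := by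
  unfold gaussPdf
  apply mul_pos _ (Real.exp_pos _)
  rw [inv_pos]
  apply Real.sqrt_pos.mpr
  exact mul_pos (pow_pos (by positivity) m) hS.det_pos

lemma sqrt_col_facts {m : ℕ} {S : Matrix (Fin m) (Fin m) ℝ} (hS : S.PosDef) {t : ℝ}
    (ht : 0 < t) (hP : (t • S).PosSemidef) (i : Fin m) :
    (fun k => hP.sqrt k i) ⬝ᵥ (S⁻¹ *ᵥ fun k => hP.sqrt k i) = t ∧
      (fun k => hP.sqrt k i) ⬝ᵥ (fun k => hP.sqrt k i) = t * S i i := by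
  set R := hP.sqrt with hR
  have hRR : R * R = t • S := hP.sqrt_mul_self
  have hRT : Rᵀ = R := by
    exact hP.sqrt_transpose
  have hdet : IsUnit R.det := by
    have h2 : R.det * R.det = t ^ m * S.det := by
      rw [← det_mul, hRR, det_smul]; simp
    have : R.det ≠ 0 := by
      intro h
      have hpos : 0 < t ^ m * S.det := mul_pos (pow_pos ht m) hS.det_pos
      rw [h, mul_zero] at h2; rw [← h2] at hpos; exact lt_irrefl _ hpos
    exact isUnit_iff_ne_zero.mpr this
  have hRinv : R * R⁻¹ = 1 := mul_nonsing_inv R hdet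
  have hRinv' : R⁻¹ * R = 1 := nonsing_inv_mul R hdet
  have hSinv : S⁻¹ = t • (R⁻¹ * R⁻¹) := by
    apply inv_eq_right_inv
    have hS' : S = t⁻¹ • (R * R) := by rw [hRR, smul_smul, inv_mul_cancel₀ ht.ne', one_smul]
    rw [hS', smul_mul, Matrix.mul_smul, smul_smul, inv_mul_cancel₀ ht.ne', one_smul]
    calc R * R * (R⁻¹ * R⁻¹) = R * (R * R⁻¹) * R⁻¹ := by noncomm_ring
      _ = 1 := by rw [hRinv, mul_one, hRinv]
  have hmid : R * S⁻¹ * R = t • 1 := by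
    have step : R * (R⁻¹ * R⁻¹) * R = 1 := by
      calc R * (R⁻¹ * R⁻¹) * R = (R * R⁻¹) * (R⁻¹ * R) := by noncomm_ring
        _ = 1 := by rw [hRinv, hRinv', one_mul]
    rw [hSinv, Matrix.mul_smul, smul_mul, step]
  have entry : ∀ A : Matrix (Fin m) (Fin m) ℝ,
      (fun k => R k i) ⬝ᵥ (A *ᵥ fun k => R k i) = (Rᵀ * A * R) i i := by
    intro A
    simp only [dotProduct, mulVec, Matrix.mul_apply, transpose_apply, Finset.sum_mul,
      Finset.mul_sum]
    rw [Finset.sum_comm]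
    exact Finset.sum_congr rfl fun j _ => Finset.sum_congr rfl fun k _ => by ring
  constructor
  · rw [entry, hRT, hmid]
    simp
  · have := entry 1
    rw [hRT, mul_one, hRR] at this
    simpa using this

open Real in
theorem sigma_point_component_approx {m N : ℕ} (w : Fin N → ℝ) (μs : Fin N → Fin m → ℝ)
    (S : Matrix (Fin m) (Fin m) ℝ) (hw : ∀ i, 0 < w i) (hsum : ∑ i, w i = 1)
    (hS : S.PosDef)
    (p : (Fin m → ℝ) → ℝ) (hp : p = fun z => ∑ i, w i * gaussPdf (μs i) S z)
    (g : (Fin m → ℝ) → ℝ) (hg : g = fun z => Real.log (p z))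
    (c σmax l : ℝ) (hl : 0 < l)
    (hσ : ∀ x : Fin m → ℝ, x ⬝ᵥ (S *ᵥ x) ≤ σmax * (x ⬝ᵥ x))
    (hG : ∀ (z x : Fin m → ℝ),
      0 ≤ iteratedFDeriv ℝ 2 g z ![x, x] + x ⬝ᵥ (S⁻¹ *ᵥ x) ∧
        iteratedFDeriv ℝ 2 g z ![x, x] + x ⬝ᵥ (S⁻¹ *ᵥ x) ≤ c * (x ⬝ᵥ x))
    (hP : ((l + m) • S).PosSemidef) (μj : Fin m → ℝ)
    (Hhat : ℝ)
    (hHhat : Hhat = l / (l + m) * g μj +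
      ∑ i : Fin m, (1 / (2 * (l + m))) *
        (g (μj + fun k => hP.sqrt k i) + g (μj - fun k => hP.sqrt k i))) :
    ∃ e : ℝ, Hhat = g μj - m / 2 + e ∧ |e| ≤ c * m * σmax / 2 := by
  have hNpos : 0 < N := by
    rcases Nat.eq_zero_or_pos N with h | h
    · subst h; simp at hsum
    · exact h
  have hppos : ∀ z, 0 < p z := by
    intro z
    rw [hp]
    have : Nonempty (Fin N) := Fin.pos_iff_nonempty.mp hNpos
    exact Finset.sum_pos (fun i _ => mul_pos (hw i) (gaussPdf_pos _ hS z))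
      Finset.univ_nonempty
  have hpcd : ContDiff ℝ 2 p := by
    rw [hp]
    exact ContDiff.sum fun i _ => contDiff_const.mul (gaussPdf_contDiff _ _)
  have hgcd : ContDiff ℝ 2 g := by
    rw [hg]
    exact hpcd.log fun z => (hppos z).ne'
  have hlm : (0:ℝ) < l + m := by positivity
  set φv : Fin m → (Fin m → ℝ) := fun i k => hP.sqrt k i with hφv
  have hfacts : ∀ i, φv i ⬝ᵥ (S⁻¹ *ᵥ φv i) = l + m ∧ φv i ⬝ᵥ φv i = (l + m) * S i i :=
    fun i => sqrt_col_facts hS hlm hP i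
  -- per-column bounds
  have hSii : ∀ i : Fin m, S i i ≤ σmax := by
    intro i
    have := hσ (Pi.single i 1)
    simpa [dotProduct, mulVec, Pi.single_apply, Finset.mul_sum, mul_ite] using this
  have hc0 : m ≠ 0 → 0 ≤ c := by
    intro hm
    obtain ⟨i⟩ : Nonempty (Fin m) := Fin.pos_iff_nonempty.mp (Nat.pos_of_ne_zero hm)
    have h := hG 0 (Pi.single i 1)
    have hx : (Pi.single i 1 : Fin m → ℝ) ⬝ᵥ Pi.single i 1 = 1 := by
      simp [dotProduct, Pi.single_apply]
    have := le_trans h.1 h.2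
    rw [hx, mul_one] at this
    exact this
  have hlow : ∀ i, 2 * g μj ≤ g (μj + φv i) + g (μj - φv i) + (l + m) := by
    intro i
    have := midpoint_ineq g hgcd μj (φv i) (φv i ⬝ᵥ (S⁻¹ *ᵥ φv i)) fun z => (hG z (φv i)).1
    rwa [(hfacts i).1] at this
  have hupp : ∀ i, g (μj + φv i) + g (μj - φv i) ≤
      2 * g μj - (l + m) + c * ((l + m) * σmax) := by
    intro i
    have hmne : m ≠ 0 := by rintro rfl; exact i.elim0
    have hcc := hc0 hmne
    have key := midpoint_ineq (fun z => -g z) hgcd.neg μj (φv i)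
      (c * (φv i ⬝ᵥ φv i) - φv i ⬝ᵥ (S⁻¹ *ᵥ φv i)) ?_
    · have hb : c * (φv i ⬝ᵥ φv i) ≤ c * ((l + m) * σmax) := by
        apply mul_le_mul_of_nonneg_left _ hcc
        rw [(hfacts i).2]
        exact mul_le_mul_of_nonneg_left (hSii i) hlm.le
      rw [(hfacts i).1] at key
      linarith
    · intro z
      have h2 := (hG z (φv i)).2
      have hneg : iteratedFDeriv ℝ 2 (fun z => -g z) z ![φv i, φv i] =
          -iteratedFDeriv ℝ 2 g z ![φv i, φv i] := by
        rw [show (fun z => -g z) = -g from rfl, iteratedFDeriv_neg_apply]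
        rfl
      rw [hneg]
      linarith
  -- summing up
  set d : Fin m → ℝ := fun i => g (μj + φv i) + g (μj - φv i) with hd
  have hHhat' : Hhat = l / (l + m) * g μj + ∑ i, (1 / (2 * (l + m))) * d i := hHhat
  have hwpos : (0:ℝ) ≤ 1 / (2 * (l + m)) := by positivity
  have hsum_low : (m : ℝ) * ((1 / (2 * (l + m))) * (2 * g μj - (l + m))) ≤
      ∑ i, (1 / (2 * (l + m))) * d i := by
    calc (m : ℝ) * ((1 / (2 * (l + m))) * (2 * g μj - (l + m)))
        = ∑ _i : Fin m, (1 / (2 * (l + m))) * (2 * g μj - (l + m)) := by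
          rw [Finset.sum_const, Finset.card_univ, Fintype.card_fin, nsmul_eq_mul]
      _ ≤ ∑ i, (1 / (2 * (l + m))) * d i := by
          apply Finset.sum_le_sum
          intro i _
          exact mul_le_mul_of_nonneg_left (by have := hlow i; simp only [hd]; linarith) hwpos
  have hsum_upp : ∑ i, (1 / (2 * (l + m))) * d i ≤
      (m : ℝ) * ((1 / (2 * (l + m))) * (2 * g μj - (l + m) + c * ((l + m) * σmax))) := by
    calc ∑ i, (1 / (2 * (l + m))) * d i
        ≤ ∑ _i : Fin m, (1 / (2 * (l + m))) *
            (2 * g μj - (l + m) + c * ((l + m) * σmax)) := by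
          apply Finset.sum_le_sum
          intro i _
          exact mul_le_mul_of_nonneg_left (by have := hupp i; simp only [hd]; linarith) hwpos
      _ = (m : ℝ) * ((1 / (2 * (l + m))) * (2 * g μj - (l + m) + c * ((l + m) * σmax))) := by
          rw [Finset.sum_const, Finset.card_univ, Fintype.card_fin, nsmul_eq_mul]
  have hid1 : l / (l + m) * g μj + (m : ℝ) * ((1 / (2 * (l + m))) * (2 * g μj - (l + m)))
      = g μj - m / 2 := by
    field_simp
    ring
  have hid2 : l / (l + m) * g μj +
      (m : ℝ) * ((1 / (2 * (l + m))) * (2 * g μj - (l + m) + c * ((l + m) * σmax)))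
      = g μj - m / 2 + c * m * σmax / 2 := by
    field_simp
    ring
  refine ⟨Hhat - g μj + m / 2, by ring, ?_⟩
  have hge : 0 ≤ Hhat - g μj + m / 2 := by
    rw [hHhat']
    linarith [hsum_low]
  have hle : Hhat - g μj + m / 2 ≤ c * m * σmax / 2 := by
    rw [hHhat']
    linarith [hsum_upp]
  rw [abs_of_nonneg hge]
  exact hle
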